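/- arXiv:math/9912252 — 5 statements merged into one kernel-verified Lean document; each statement's English description precedes it below -/
import Mathlib

section
/- The function w : ℕ → ℕ defined by w(k) = k·φ(lcm(k,f)) / ((k,h)·φ(f)) is multiplicative, where φ is Euler's totient function. -/
theorem w_multiplicative (f h : ℕ) (hf : 1 ≤ f) (hh : 1 ≤ h)
    (w : ℕ → ℕ)
    (hw : ∀ k, w k = k * Nat.totient (Nat.lcm k f) / (Nat.gcd k h * Nat.totient f)) :
    ∀ m n : ℕ, Nat.Coprime m n → w (m * n) = w m * w n := by
  intro m n hmn
  have hf0 : 0 < f := hf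
  have hφf : 0 < Nat.totient f := Nat.totient_pos.mpr hf0
  set X := Nat.lcm m f with hX
  set Y := Nat.lcm n f with hY
  set L := Nat.lcm (m * n) f with hL
  -- gcd X Y = f
  have hg : Nat.gcd X Y = f := by
    apply Nat.dvd_antisymm
    · have h1 : Nat.gcd X Y ∣ m * f :=
        (Nat.gcd_dvd_left X Y).trans (Nat.lcm_dvd (dvd_mul_right m f) (dvd_mul_left f m))
      have h2 : Nat.gcd X Y ∣ n * f :=
        (Nat.gcd_dvd_right X Y).trans (Nat.lcm_dvd (dvd_mul_right n f) (dvd_mul_left f n))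
      have := Nat.dvd_gcd h1 h2
      rwa [Nat.gcd_mul_right, hmn, one_mul] at this
    · exact Nat.dvd_gcd (Nat.dvd_lcm_right m f) (Nat.dvd_lcm_right n f)
  -- lcm X Y = L
  have hl : Nat.lcm X Y = L := by
    apply Nat.dvd_antisymm
    · apply Nat.lcm_dvd
      · exact Nat.lcm_dvd ((Nat.dvd_mul_right m n).trans (Nat.dvd_lcm_left _ f))
          (Nat.dvd_lcm_right _ f)
      · exact Nat.lcm_dvd ((Nat.dvd_mul_left n m).trans (Nat.dvd_lcm_left _ f))
          (Nat.dvd_lcm_right _ f)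
    · apply Nat.lcm_dvd
      · exact Nat.Coprime.mul_dvd_of_dvd_of_dvd
          hmn ((Nat.dvd_lcm_left m f).trans (Nat.dvd_lcm_left X Y))
          ((Nat.dvd_lcm_left n f).trans (Nat.dvd_lcm_right X Y))
      · exact (Nat.dvd_lcm_right m f).trans (Nat.dvd_lcm_left X Y)
  -- key totient identity
  have hfL : f ∣ L := Nat.dvd_lcm_right _ _
  have hXY : X * Y = f * L := by rw [← hg, ← hl, Nat.gcd_mul_lcm]
  have eq1 := Nat.totient_gcd_mul_totient_mul X Y
  rw [hg, hXY] at eq1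
  have eq2 := Nat.totient_gcd_mul_totient_mul f L
  rw [Nat.gcd_eq_left hfL] at eq2
  have key : Nat.totient f * Nat.totient L = Nat.totient X * Nat.totient Y := by
    apply Nat.eq_of_mul_eq_mul_right hf0
    calc Nat.totient f * Nat.totient L * f
        = Nat.totient f * Nat.totient (f * L) := by rw [← eq2]
      _ = Nat.totient X * Nat.totient Y * f := eq1
  -- gcd multiplicativity
  have hgcd : Nat.gcd (m * n) h = Nat.gcd m h * Nat.gcd n h := by
    rw [Nat.gcd_comm (m * n) h, Nat.Coprime.gcd_mul h hmn, Nat.gcd_comm h m, Nat.gcd_comm h n]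
  -- divisibility of denominators into numerators
  have hdvd : ∀ k, Nat.gcd k h * Nat.totient f ∣ k * Nat.totient (Nat.lcm k f) :=
    fun k => mul_dvd_mul (Nat.gcd_dvd_left k h)
      (Nat.totient_dvd_of_dvd (Nat.dvd_lcm_right k f))
  rw [hw, hw, hw, Nat.div_mul_div_comm (hdvd m) (hdvd n)]
  have hnum : m * Nat.totient X * (n * Nat.totient Y)
      = m * n * Nat.totient L * Nat.totient f := by
    rw [mul_mul_mul_comm, ← key]; ring
  have hden : Nat.gcd m h * Nat.totient f * (Nat.gcd n h * Nat.totient f)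
      = Nat.gcd (m * n) h * Nat.totient f * Nat.totient f := by
    rw [hgcd]; ring
  rw [hnum, hden, Nat.mul_div_mul_right _ _ hφf]
end

section
/- With w as in the context, and for 1 ≤ a ≤ f with gcd(a,f) = 1, the series ∑_{n ≥ 1, a ≡ 1 mod gcd(f,n)} μ(n)/w(n) converges absolutely and equals ∏_{p | gcd(a−1,f)} (1 − 1/w(p)) · ∏_{p ∤ f} (1 − 1/w(p)). -/
open ArithmeticFunction

private lemma prime_le_sub_one_sq {p : ℕ} (hp : 3 ≤ p) : p ≤ (p - 1) ^ 2 := by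
  obtain ⟨q, rfl⟩ : ∃ q, p = q + 1 := ⟨p - 1, by omega⟩
  rw [Nat.add_sub_cancel]
  nlinarith

private lemma sq_totient_bound {n : ℕ} (hn : Squarefree n) : n ≤ 2 * Nat.totient n ^ 2 := by
  have hn0 : n ≠ 0 := hn.ne_zero
  have hprod : ∏ p ∈ n.primeFactors, p = n := Nat.prod_primeFactors_of_squarefree hn
  have htot : Nat.totient n = ∏ p ∈ n.primeFactors, (p - 1) := by
    have h := Nat.totient_mul_prod_primeFactors n
    rw [hprod] at h
    exact Nat.eq_of_mul_eq_mul_left (Nat.pos_of_ne_zero hn0) (by rw [mul_comm n _]; exact h)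
  have main : ∏ p ∈ n.primeFactors, p ≤ 2 * (∏ p ∈ n.primeFactors, (p - 1)) ^ 2 := by
    by_cases h2 : 2 ∈ n.primeFactors
    · have he : ∏ p ∈ n.primeFactors.erase 2, p ≤ ∏ p ∈ n.primeFactors.erase 2, (p - 1) ^ 2 := by
        apply Finset.prod_le_prod'
        intro p hp
        have hpp : Nat.Prime p := Nat.prime_of_mem_primeFactors (Finset.mem_of_mem_erase hp)
        exact prime_le_sub_one_sq (by have := hpp.two_le; have := Finset.ne_of_mem_erase hp; omega)
      calc ∏ p ∈ n.primeFactors, p = 2 * ∏ p ∈ n.primeFactors.erase 2, p :=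
            (Finset.mul_prod_erase _ _ h2).symm
        _ ≤ 2 * ∏ p ∈ n.primeFactors.erase 2, (p - 1) ^ 2 := by
            exact Nat.mul_le_mul_left 2 he
        _ = 2 * (∏ p ∈ n.primeFactors.erase 2, (p - 1)) ^ 2 := by rw [Finset.prod_pow]
        _ = 2 * ((2 : ℕ) - 1) ^ 2 * (∏ p ∈ n.primeFactors.erase 2, (p - 1)) ^ 2 := by norm_num
        _ = 2 * (((2 : ℕ) - 1) * ∏ p ∈ n.primeFactors.erase 2, (p - 1)) ^ 2 := by ring
        _ = 2 * (∏ p ∈ n.primeFactors, (p - 1)) ^ 2 := by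
            rw [Finset.mul_prod_erase _ (fun p => p - 1) h2]
    · have h1 : ∏ p ∈ n.primeFactors, p ≤ ∏ p ∈ n.primeFactors, (p - 1) ^ 2 := by
        apply Finset.prod_le_prod'
        intro p hp
        have hpp : Nat.Prime p := Nat.prime_of_mem_primeFactors hp
        refine prime_le_sub_one_sq ?_
        have := hpp.two_le
        rcases this.lt_or_eq with h | h
        · omega
        · exact absurd (h ▸ hp) h2
      calc ∏ p ∈ n.primeFactors, p ≤ ∏ p ∈ n.primeFactors, (p - 1) ^ 2 := h1
        _ = (∏ p ∈ n.primeFactors, (p - 1)) ^ 2 := by rw [Finset.prod_pow]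
        _ ≤ 2 * (∏ p ∈ n.primeFactors, (p - 1)) ^ 2 := by omega
  calc n = ∏ p ∈ n.primeFactors, p := hprod.symm
    _ ≤ 2 * (∏ p ∈ n.primeFactors, (p - 1)) ^ 2 := main
    _ = 2 * Nat.totient n ^ 2 := by rw [htot]

private lemma totient_lcm_mul_totient_gcd (x y : ℕ) :
    Nat.totient (Nat.lcm x y) * Nat.totient (Nat.gcd x y) =
      Nat.totient x * Nat.totient y := by
  let A : ArithmeticFunction ℕ := ⟨Nat.totient, Nat.totient_zero⟩
  have hm : A.IsMultiplicative := ⟨Nat.totient_one, fun hmn => Nat.totient_mul hmn⟩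
  have := hm.lcm_apply_mul_gcd_apply (x := x) (y := y)
  simpa [A] using this

private lemma gcd_mul_of_coprime {m n : ℕ} (k : ℕ) (hmn : Nat.Coprime m n) :
    Nat.gcd k (m * n) = Nat.gcd k m * Nat.gcd k n := by
  have hc : Nat.Coprime (Nat.gcd k m) (Nat.gcd k n) :=
    Nat.Coprime.coprime_dvd_left (Nat.gcd_dvd_right k m)
      (Nat.Coprime.coprime_dvd_right (Nat.gcd_dvd_right k n) hmn)
  apply Nat.dvd_antisymm
  · have h1 : Nat.gcd k (m * n) ∣ Nat.gcd (Nat.gcd k (m * n)) m * Nat.gcd (Nat.gcd k (m * n)) n :=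
      Nat.dvd_gcd_mul_gcd_iff_dvd_mul.mpr (Nat.gcd_dvd_right k (m * n))
    exact h1.trans (mul_dvd_mul
      (Nat.dvd_gcd ((Nat.gcd_dvd_left _ _).trans (Nat.gcd_dvd_left k (m * n)))
        (Nat.gcd_dvd_right _ _))
      (Nat.dvd_gcd ((Nat.gcd_dvd_left _ _).trans (Nat.gcd_dvd_left k (m * n)))
        (Nat.gcd_dvd_right _ _)))
  · exact Nat.dvd_gcd
      (hc.mul_dvd_of_dvd_of_dvd (Nat.gcd_dvd_left k m) (Nat.gcd_dvd_left k n))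
      (mul_dvd_mul (Nat.gcd_dvd_right k m) (Nat.gcd_dvd_right k n))

section KeyFacts

variable {f h : ℕ} (hf : 1 ≤ f) (hh : 1 ≤ h) {w : ℕ → ℕ}
  (hw : ∀ k, w k = k * Nat.totient (Nat.lcm k f) / (Nat.gcd k h * Nat.totient f))

include hf hh hw

private lemma w_key : ∀ k, w k * (Nat.totient (Nat.gcd k f) * Nat.gcd k h) =
    k * Nat.totient k := by
  intro k
  have hdvd : (Nat.gcd k h * Nat.totient f) ∣ (k * Nat.totient (Nat.lcm k f)) :=
    mul_dvd_mul (Nat.gcd_dvd_left k h) (Nat.totient_dvd_of_dvd (Nat.dvd_lcm_right k f))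
  have h1 : w k * (Nat.gcd k h * Nat.totient f) = k * Nat.totient (Nat.lcm k f) := by
    rw [hw k]; exact Nat.div_mul_cancel hdvd
  have h2 : w k * (Nat.totient (Nat.gcd k f) * Nat.gcd k h) * Nat.totient f =
      k * Nat.totient k * Nat.totient f := by
    calc w k * (Nat.totient (Nat.gcd k f) * Nat.gcd k h) * Nat.totient f
        = w k * (Nat.gcd k h * Nat.totient f) * Nat.totient (Nat.gcd k f) := by ring
      _ = k * Nat.totient (Nat.lcm k f) * Nat.totient (Nat.gcd k f) := by rw [h1]
      _ = k * (Nat.totient (Nat.lcm k f) * Nat.totient (Nat.gcd k f)) := by ring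
      _ = k * (Nat.totient k * Nat.totient f) := by rw [totient_lcm_mul_totient_gcd]
      _ = k * Nat.totient k * Nat.totient f := by ring
  exact Nat.eq_of_mul_eq_mul_right (Nat.totient_pos.mpr hf) h2

private lemma w_pos : ∀ k, 1 ≤ k → 0 < w k := by
  intro k hk
  rcases Nat.eq_zero_or_pos (w k) with h0 | h0
  · exfalso
    have := w_key hf hh hw k
    rw [h0, zero_mul] at this
    have hk' : 0 < k * Nat.totient k :=
      Nat.mul_pos hk (Nat.totient_pos.mpr hk)
    omega
  · exact h0

private lemma w_one : w 1 = 1 := by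
  have := w_key hf hh hw 1
  simpa using this

private lemma w_mul {m n : ℕ} (hm : 1 ≤ m) (hn : 1 ≤ n) (hmn : Nat.Coprime m n) :
    w (m * n) = w m * w n := by
  have hgf : Nat.gcd (m * n) f = Nat.gcd m f * Nat.gcd n f := by
    rw [Nat.gcd_comm (m * n) f, gcd_mul_of_coprime f hmn, Nat.gcd_comm f m, Nat.gcd_comm f n]
  have hgh : Nat.gcd (m * n) h = Nat.gcd m h * Nat.gcd n h := by
    rw [Nat.gcd_comm (m * n) h, gcd_mul_of_coprime h hmn, Nat.gcd_comm h m, Nat.gcd_comm h n]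
  have hcg : Nat.Coprime (Nat.gcd m f) (Nat.gcd n f) :=
    Nat.Coprime.coprime_dvd_left (Nat.gcd_dvd_left m f)
      (Nat.Coprime.coprime_dvd_right (Nat.gcd_dvd_left n f) hmn)
  have htg : Nat.totient (Nat.gcd (m * n) f) =
      Nat.totient (Nat.gcd m f) * Nat.totient (Nat.gcd n f) := by
    rw [hgf]; exact Nat.totient_mul hcg
  have hD : 0 < Nat.totient (Nat.gcd (m * n) f) * Nat.gcd (m * n) h := by
    apply Nat.mul_pos
    · exact Nat.totient_pos.mpr (Nat.gcd_pos_of_pos_left f (Nat.mul_pos hm hn))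
    · exact Nat.gcd_pos_of_pos_left h (Nat.mul_pos hm hn)
  apply Nat.eq_of_mul_eq_mul_right hD
  calc w (m * n) * (Nat.totient (Nat.gcd (m * n) f) * Nat.gcd (m * n) h)
      = (m * n) * Nat.totient (m * n) := w_key hf hh hw (m * n)
    _ = (m * Nat.totient m) * (n * Nat.totient n) := by
        rw [Nat.totient_mul hmn]; ring
    _ = (w m * (Nat.totient (Nat.gcd m f) * Nat.gcd m h)) *
          (w n * (Nat.totient (Nat.gcd n f) * Nat.gcd n h)) := by
        rw [w_key hf hh hw m, w_key hf hh hw n]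
    _ = w m * w n * (Nat.totient (Nat.gcd (m * n) f) * Nat.gcd (m * n) h) := by
        rw [htg, hgh]; ring

private lemma w_lower : ∀ k, k * Nat.totient k ≤ w k * (f * h) := by
  intro k
  calc k * Nat.totient k = w k * (Nat.totient (Nat.gcd k f) * Nat.gcd k h) :=
        (w_key hf hh hw k).symm
    _ ≤ w k * (f * h) := by
        apply Nat.mul_le_mul_left
        apply Nat.mul_le_mul
        · exact (Nat.totient_le _).trans (Nat.le_of_dvd hf (Nat.gcd_dvd_right k f))
        · exact Nat.le_of_dvd hh (Nat.gcd_dvd_right k h)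

end KeyFacts

private lemma summable_one_div_mul_sqrt :
    Summable (fun n : ℕ => 1 / ((n : ℝ) * Real.sqrt n)) := by
  have heq : (fun n : ℕ => 1 / ((n : ℝ) * Real.sqrt n)) =
      fun n : ℕ => (n : ℝ) ^ (-(3 / 2 : ℝ)) := by
    funext n
    rcases Nat.eq_zero_or_pos n with rfl | hn
    · simp [Real.zero_rpow (show -(3/2 : ℝ) ≠ 0 by norm_num)]
    · have hn' : (0 : ℝ) < n := by exact_mod_cast hn
      rw [Real.rpow_neg hn'.le, show (3 / 2 : ℝ) = 1 + 1 / 2 by norm_num,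
        Real.rpow_add hn', Real.rpow_one, ← Real.sqrt_eq_rpow, one_div]
  rw [heq]
  exact Real.summable_nat_rpow.mpr (by norm_num)

open ArithmeticFunction in
private lemma aux_main {f h : ℕ} (hf : 1 ≤ f) (hh : 1 ≤ h) {w : ℕ → ℕ}
    (hw : ∀ k, w k = k * Nat.totient (Nat.lcm k f) / (Nat.gcd k h * Nat.totient f))
    (P : ℕ → Prop) [DecidablePred P] (hP1 : P 1)
    (hPmul : ∀ m n, 1 ≤ m → 1 ≤ n → Nat.Coprime m n → (P (m * n) ↔ P m ∧ P n))
    (U : ℕ → ℝ)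
    (hU : ∀ n, U n = if 1 ≤ n ∧ P n then (moebius n : ℝ) / (w n : ℝ) else 0) :
    Summable (fun n => |U n|) ∧
      HasProd (fun p : Nat.Primes => 1 + U (p : ℕ)) (∑' n, U n) := by
  have hU0 : U 0 = 0 := by rw [hU]; simp
  have hU1 : U 1 = 1 := by
    rw [hU]; simp [hP1, w_one hf hh hw]
  have hUmul : ∀ {m n : ℕ}, Nat.Coprime m n → U (m * n) = U m * U n := by
    intro m n hmn
    rcases Nat.eq_zero_or_pos m with rfl | hm
    · rw [zero_mul, hU0, zero_mul]
    rcases Nat.eq_zero_or_pos n with rfl | hn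
    · rw [mul_zero, hU0, mul_zero]
    by_cases hsq : Squarefree (m * n)
    · have hmu : moebius (m * n) = moebius m * moebius n :=
        isMultiplicative_moebius.map_mul_of_coprime hmn
      have hw' : w (m * n) = w m * w n := w_mul hf hh hw hm hn hmn
      have hcond : (1 ≤ m * n ∧ P (m * n)) ↔ ((1 ≤ m ∧ P m) ∧ (1 ≤ n ∧ P n)) := by
        constructor
        · rintro ⟨-, hp⟩
          have := (hPmul m n hm hn hmn).mp hp
          exact ⟨⟨hm, this.1⟩, ⟨hn, this.2⟩⟩
        · rintro ⟨⟨-, h1⟩, ⟨-, h2⟩⟩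
          exact ⟨Nat.mul_pos hm hn, (hPmul m n hm hn hmn).mpr ⟨h1, h2⟩⟩
      rw [hU (m * n), hU m, hU n]
      by_cases hPc : (1 ≤ m ∧ P m) ∧ (1 ≤ n ∧ P n)
      · rw [if_pos (hcond.mpr hPc), if_pos hPc.1, if_pos hPc.2, hmu, hw']
        push_cast
        rw [div_mul_div_comm]
      · rw [if_neg (fun hx => hPc (hcond.mp hx))]
        rcases Decidable.not_and_iff_or_not.mp hPc with h1 | h1
        · rw [if_neg h1, zero_mul]
        · rw [if_neg h1, mul_zero]
    · have hns : ¬Squarefree m ∨ ¬Squarefree n := by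
        by_contra hc
        push_neg at hc
        exact hsq ((Nat.squarefree_mul hmn).mpr ⟨hc.1, hc.2⟩)
      have hL : U (m * n) = 0 := by
        rw [hU]; simp [moebius_eq_zero_of_not_squarefree hsq]
      rcases hns with h1 | h1
      · have : U m = 0 := by
          rw [hU]; simp [moebius_eq_zero_of_not_squarefree h1]
        rw [hL, this, zero_mul]
      · have : U n = 0 := by
          rw [hU]; simp [moebius_eq_zero_of_not_squarefree h1]
        rw [hL, this, mul_zero]
  have hcmp : ∀ n : ℕ, |U n| ≤ ((f * h : ℕ) : ℝ) * Real.sqrt 2 * (1 / ((n : ℝ) * Real.sqrt n)) := by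
    intro n
    have hCpos : (0 : ℝ) ≤ ((f * h : ℕ) : ℝ) * Real.sqrt 2 := by positivity
    rcases Nat.eq_zero_or_pos n with rfl | hn
    · simp [hU0]
    by_cases hsq : Squarefree n
    swap
    · have : U n = 0 := by rw [hU]; simp [moebius_eq_zero_of_not_squarefree hsq]
      rw [this, abs_zero]; positivity
    have hw1 : 1 ≤ w n := w_pos hf hh hw n hn
    have hwR : (0 : ℝ) < (w n : ℝ) := by exact_mod_cast hw1
    have htR : (0 : ℝ) < (Nat.totient n : ℝ) := by
      exact_mod_cast Nat.totient_pos.mpr hn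
    have hnR : (0 : ℝ) < (n : ℝ) := by exact_mod_cast hn
    have hsR : (0 : ℝ) < Real.sqrt n := Real.sqrt_pos.mpr hnR
    have hUb : |U n| ≤ 1 / (w n : ℝ) := by
      rw [hU]
      split
      · rw [abs_div, abs_of_nonneg hwR.le]
        have hmu : |(moebius n : ℝ)| ≤ 1 := by
          have := abs_moebius_le_one (n := n)
          calc |(moebius n : ℝ)| = ((|moebius n| : ℤ) : ℝ) := by push_cast; rfl
            _ ≤ 1 := by exact_mod_cast this
        gcongr
      · rw [abs_zero]; positivity
    have step1 : 1 / (w n : ℝ) ≤ ((f * h : ℕ) : ℝ) / ((n : ℝ) * (Nat.totient n : ℝ)) := by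
      rw [div_le_div_iff₀ hwR (by positivity)]
      have := w_lower hf hh hw n
      calc 1 * ((n : ℝ) * (Nat.totient n : ℝ)) = ((n * Nat.totient n : ℕ) : ℝ) := by
            push_cast; ring
        _ ≤ ((w n * (f * h) : ℕ) : ℝ) := by exact_mod_cast this
        _ = ((f * h : ℕ) : ℝ) * (w n : ℝ) := by push_cast; ring
    have hsn : Real.sqrt n ≤ Real.sqrt 2 * (Nat.totient n : ℝ) := by
      have h2 : (n : ℝ) ≤ 2 * (Nat.totient n : ℝ) ^ 2 := by
        exact_mod_cast sq_totient_bound hsq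
      calc Real.sqrt n ≤ Real.sqrt (2 * (Nat.totient n : ℝ) ^ 2) := Real.sqrt_le_sqrt h2
        _ = Real.sqrt 2 * (Nat.totient n : ℝ) := by
            rw [Real.sqrt_mul (by norm_num), Real.sqrt_sq htR.le]
    have step2 : ((f * h : ℕ) : ℝ) / ((n : ℝ) * (Nat.totient n : ℝ)) ≤
        ((f * h : ℕ) : ℝ) * Real.sqrt 2 * (1 / ((n : ℝ) * Real.sqrt n)) := by
      rw [mul_one_div, div_le_div_iff₀ (by positivity) (by positivity)]
      have hfh : (0 : ℝ) ≤ ((f * h : ℕ) : ℝ) := by positivity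
      calc ((f * h : ℕ) : ℝ) * ((n : ℝ) * Real.sqrt n)
          = (((f * h : ℕ) : ℝ) * (n : ℝ)) * Real.sqrt n := by ring
        _ ≤ (((f * h : ℕ) : ℝ) * (n : ℝ)) * (Real.sqrt 2 * (Nat.totient n : ℝ)) := by
            apply mul_le_mul_of_nonneg_left hsn (by positivity)
        _ = ((f * h : ℕ) : ℝ) * Real.sqrt 2 * ((n : ℝ) * (Nat.totient n : ℝ)) := by ring
    exact hUb.trans (step1.trans step2)
  have hsummand : Summable (fun n : ℕ => ((f * h : ℕ) : ℝ) * Real.sqrt 2 *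
      (1 / ((n : ℝ) * Real.sqrt n))) := summable_one_div_mul_sqrt.mul_left _
  have hsum : Summable (fun n => |U n|) :=
    Summable.of_nonneg_of_le (fun n => abs_nonneg _) hcmp hsummand
  refine ⟨hsum, ?_⟩
  have hnorm : Summable (fun n => ‖U n‖) := by simpa [Real.norm_eq_abs] using hsum
  have hEP := EulerProduct.eulerProduct_hasProd (f := U) hU1 (fun {m n} hmn => hUmul hmn)
    hnorm hU0
  have hfac : (fun p : Nat.Primes => ∑' e : ℕ, U ((p : ℕ) ^ e)) =
      fun p : Nat.Primes => 1 + U (p : ℕ) := by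
    funext p
    have hp := p.2
    have hz : ∀ e ∉ ({0, 1} : Finset ℕ), U ((p : ℕ) ^ e) = 0 := by
      intro e he
      have he2 : 2 ≤ e := by
        simp only [Finset.mem_insert, Finset.mem_singleton] at he
        omega
      have hnsq : ¬Squarefree ((p : ℕ) ^ e) := by
        intro hsq
        have hdvd : (p : ℕ) * (p : ℕ) ∣ (p : ℕ) ^ e := by
          have : (p : ℕ) ^ 2 ∣ (p : ℕ) ^ e := pow_dvd_pow _ he2
          rwa [sq] at this
        exact hp.prime.not_unit (hsq _ hdvd)
      rw [hU]; simp [moebius_eq_zero_of_not_squarefree hnsq]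
    rw [tsum_eq_sum hz, Finset.sum_insert (by norm_num), Finset.sum_singleton, pow_zero,
      pow_one, hU1]
  rw [← hfac]
  exact hEP

open ArithmeticFunction in
theorem sum_moebius_div_w_eq_euler_product (f h : ℕ) (hf : 1 ≤ f) (hh : 1 ≤ h)
    (a : ℕ) (ha1 : 1 ≤ a) (haf : a ≤ f) (hco : Nat.Coprime a f)
    (w : ℕ → ℕ)
    (hw : ∀ k, w k = k * Nat.totient (Nat.lcm k f) / (Nat.gcd k h * Nat.totient f))
    (T : ℕ → ℝ)
    (hT : ∀ n, T n = if 1 ≤ n ∧ a % Nat.gcd f n = 1 % Nat.gcd f n then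
      (ArithmeticFunction.moebius n : ℝ) / (w n : ℝ) else 0) :
    Summable (fun n => |T n|) ∧
    ∑' n : ℕ, T n =
      (∏ p ∈ (Nat.gcd (a - 1) f).primeFactors, (1 - 1 / (w p : ℝ))) *
        ∏' p : Nat.Primes, (if (p : ℕ) ∣ f then 1 else 1 - 1 / (w (p : ℕ) : ℝ)) := by
  -- first application of aux_main : the function T
  have hP1 : a % Nat.gcd f 1 = 1 % Nat.gcd f 1 := by
    rw [Nat.gcd_one_right]
    simp [Nat.mod_one]
  have hPmul : ∀ m n, 1 ≤ m → 1 ≤ n → Nat.Coprime m n →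
      ((a % Nat.gcd f (m * n) = 1 % Nat.gcd f (m * n)) ↔
        ((a % Nat.gcd f m = 1 % Nat.gcd f m) ∧ (a % Nat.gcd f n = 1 % Nat.gcd f n))) := by
    intro m n hm hn hmn
    have hg : Nat.gcd f (m * n) = Nat.gcd f m * Nat.gcd f n := gcd_mul_of_coprime f hmn
    have hcg : Nat.Coprime (Nat.gcd f m) (Nat.gcd f n) :=
      Nat.Coprime.coprime_dvd_left (Nat.gcd_dvd_right f m)
        (Nat.Coprime.coprime_dvd_right (Nat.gcd_dvd_right f n) hmn)
    rw [hg]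
    exact ⟨fun hx => (Nat.modEq_and_modEq_iff_modEq_mul hcg).mpr hx,
      fun hx => (Nat.modEq_and_modEq_iff_modEq_mul hcg).mp hx⟩
  obtain ⟨hsumT, hprodT⟩ := aux_main hf hh hw
    (fun n => a % Nat.gcd f n = 1 % Nat.gcd f n) hP1 hPmul T (fun n => hT n)
  -- second application : the function U₂
  set U₂ : ℕ → ℝ := fun n => if 1 ≤ n ∧ Nat.gcd n f = 1 then
    (moebius n : ℝ) / (w n : ℝ) else 0 with hU₂def
  have hP1' : Nat.gcd 1 f = 1 := Nat.gcd_one_left f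
  have hPmul' : ∀ m n, 1 ≤ m → 1 ≤ n → Nat.Coprime m n →
      ((Nat.gcd (m * n) f = 1) ↔ ((Nat.gcd m f = 1) ∧ (Nat.gcd n f = 1))) := by
    intro m n _ _ _
    exact Nat.coprime_mul_iff_left
  obtain ⟨hsum₂, hprod₂⟩ := aux_main hf hh hw
    (fun n => Nat.gcd n f = 1) hP1' hPmul' U₂ (fun n => rfl)
  refine ⟨hsumT, ?_⟩
  set S := (Nat.gcd (a - 1) f).primeFactors with hSdef
  set H : Nat.Primes → ℝ :=
    fun p => if (p : ℕ) ∣ f then 1 else 1 - 1 / (w (p : ℕ) : ℝ) with hHdef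
  set G : Nat.Primes → ℝ :=
    fun p => if (p : ℕ) ∈ S then 1 - 1 / (w (p : ℕ) : ℝ) else 1 with hGdef
  have hH : (fun p : Nat.Primes => 1 + U₂ (p : ℕ)) = H := by
    funext p
    have hp := p.2
    by_cases hpf : (p : ℕ) ∣ f
    · have hnc : ¬((p : ℕ).gcd f = 1) := by
        intro hx
        have : (p : ℕ) ∣ 1 := hx ▸ Nat.dvd_gcd dvd_rfl hpf
        exact hp.one_lt.ne' (Nat.dvd_one.mp this)
      rw [hHdef, hU₂def]
      simp only [hpf, if_true, hnc, and_false, if_false, add_zero, if_pos]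
    · have hc : (p : ℕ).gcd f = 1 := (Nat.Prime.coprime_iff_not_dvd hp).mpr hpf
      rw [hHdef, hU₂def]
      simp only [hpf, if_false, hc, and_true, hp.one_lt.le, if_pos, moebius_apply_prime hp]
      push_cast
      ring
  have hprodH : HasProd H (∑' n, U₂ n) := hH ▸ hprod₂
  -- finite product part
  set s : Finset Nat.Primes := S.attach.map
    ⟨fun x => (⟨x.1, Nat.prime_of_mem_primeFactors x.2⟩ : Nat.Primes),
      by intro x y hxy; exact Subtype.ext (by simpa using congrArg Subtype.val hxy)⟩ with hsdef
  have hmem : ∀ p : Nat.Primes, p ∈ s ↔ (p : ℕ) ∈ S := by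
    intro p
    constructor
    · intro hp
      rw [hsdef, Finset.mem_map] at hp
      obtain ⟨x, -, hx⟩ := hp
      have : x.1 = (p : ℕ) := congrArg Subtype.val hx
      exact this ▸ x.2
    · intro hp
      rw [hsdef, Finset.mem_map]
      exact ⟨⟨(p : ℕ), hp⟩, Finset.mem_attach _ _, Subtype.ext rfl⟩
  have hGprod : HasProd G (∏ p ∈ S, (1 - 1 / (w p : ℝ))) := by
    have h1 : ∀ p ∉ s, G p = 1 := by
      intro p hp
      rw [hGdef]
      exact if_neg (fun hmem' => hp ((hmem p).mpr hmem'))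
    have h2 : HasProd G (∏ p ∈ s, G p) := hasProd_prod_of_ne_finset_one h1
    have h3 : ∏ p ∈ s, G p = ∏ p ∈ S, (1 - 1 / (w p : ℝ)) := by
      rw [hsdef, Finset.prod_map]
      rw [← Finset.prod_attach S (fun p => 1 - 1 / (w p : ℝ))]
      apply Finset.prod_congr rfl
      intro x _
      exact if_pos x.2
    rwa [h3] at h2
  -- factor identity
  have hfacT : (fun p : Nat.Primes => 1 + T (p : ℕ)) = fun p => G p * H p := by
    funext p
    have hp := p.2
    have hp1 : 1 ≤ (p : ℕ) := hp.one_lt.le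
    have hSiff : ((p : ℕ) ∈ S) ↔ ((p : ℕ) ∣ a - 1 ∧ (p : ℕ) ∣ f) := by
      rw [hSdef, Nat.mem_primeFactors]
      have hgne : Nat.gcd (a - 1) f ≠ 0 := by
        intro hx
        have := (Nat.gcd_eq_zero_iff.mp hx).2
        omega
      simp only [hp, true_and, hgne, ne_eq, not_false_eq_true, and_true]
      exact Nat.dvd_gcd_iff
    rw [hT (p : ℕ)]
    by_cases hpf : (p : ℕ) ∣ f
    · have hgfp : Nat.gcd f (p : ℕ) = (p : ℕ) :=
        Nat.dvd_antisymm (Nat.gcd_dvd_right f p) (Nat.dvd_gcd hpf dvd_rfl)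
      have hcond : (a % (p : ℕ) = 1 % (p : ℕ)) ↔ (p : ℕ) ∣ a - 1 :=
        ⟨fun hx => (Nat.modEq_iff_dvd' ha1).mp (Nat.ModEq.symm hx),
          fun hx => Nat.ModEq.symm ((Nat.modEq_iff_dvd' ha1).mpr hx)⟩
      have hHp : H p = 1 := if_pos hpf
      by_cases hpa : (p : ℕ) ∣ a - 1
      · rw [hgfp, if_pos ⟨hp1, hcond.mpr hpa⟩, moebius_apply_prime hp]
        have hGp : G p = 1 - 1 / (w (p : ℕ) : ℝ) := if_pos (hSiff.mpr ⟨hpa, hpf⟩)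
        rw [hGp, hHp, mul_one]
        push_cast
        ring
      · rw [hgfp, if_neg (fun hx => hpa (hcond.mp hx.2))]
        have hGp : G p = 1 := if_neg (fun hx => hpa (hSiff.mp hx).1)
        rw [hGp, hHp, mul_one, add_zero]
    · have hgfp : Nat.gcd f (p : ℕ) = 1 := by
        rw [Nat.gcd_comm]
        exact (Nat.Prime.coprime_iff_not_dvd hp).mpr hpf
      rw [hgfp, if_pos ⟨hp1, by simp [Nat.mod_one]⟩, moebius_apply_prime hp]
      have hGp : G p = 1 := if_neg (fun hx => hpf (hSiff.mp hx).2)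
      have hHp : H p = 1 - 1 / (w (p : ℕ) : ℝ) := if_neg hpf
      rw [hGp, hHp, one_mul]
      push_cast
      ring
  rw [hfacT] at hprodT
  have hprodGH : HasProd (fun p : Nat.Primes => G p * H p)
      ((∏ p ∈ S, (1 - 1 / (w p : ℝ))) * ∑' n, U₂ n) := hGprod.mul hprodH
  have hmain : ∑' n, T n = (∏ p ∈ S, (1 - 1 / (w p : ℝ))) * ∑' n, U₂ n :=
    hprodT.unique hprodGH
  rw [hmain, ← hprodH.tprod_eq]
end

section
/- Let f, h ≥ 1 with h odd, 1 ≤ a ≤ f with gcd(a,f) = 1, and let Δ be the discriminant of a quadratic number field with b = Δ/gcd(f,Δ). Define S(b) = ∑_{n ≥ 1, Δ | lcm(n,f), a ≡ 1 mod gcd(f,n)} μ(n)/w(n). If b is even, then S(b) = 0. -/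
lemma pow2_dvd_f_aux {n f : ℕ} (hn : Squarefree n) (hf : f ≠ 0) {k : ℕ} (hk : 2 ≤ k)
    (h : 2 ^ k ∣ Nat.lcm n f) : 2 ^ k ∣ f := by
  have hn0 : n ≠ 0 := hn.ne_zero
  have hL : Nat.lcm n f ≠ 0 := Nat.lcm_ne_zero hn0 hf
  rw [Nat.Prime.pow_dvd_iff_le_factorization Nat.prime_two hL,
    Nat.factorization_lcm hn0 hf] at h
  rw [Nat.Prime.pow_dvd_iff_le_factorization Nat.prime_two hf]
  have h1 : n.factorization 2 ≤ 1 := hn.natFactorization_le_one 2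
  simp only [Finsupp.sup_apply] at h
  omega

open ArithmeticFunction in
theorem S_eq_zero_of_b_even (f h : ℕ) (hf : 1 ≤ f) (hh : 1 ≤ h) (hhodd : Odd h)
    (a : ℕ) (ha1 : 1 ≤ a) (haf : a ≤ f) (hco : Nat.Coprime a f)
    (w : ℕ → ℕ)
    (hw : ∀ k, w k = k * Nat.totient (Nat.lcm k f) / (Nat.gcd k h * Nat.totient f))
    (d : ℤ) (hd : Squarefree d) (hd0 : d ≠ 0) (hd1 : d ≠ 1)
    (Δ : ℤ) (hΔ : Δ = if d % 4 = 1 then d else 4 * d)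
    (b : ℤ) (hb : b = Δ / (Int.gcd (f : ℤ) Δ : ℤ)) (hbeven : Even b)
    (S : ℕ → ℝ)
    (hS : ∀ n, S n = if 1 ≤ n ∧ Δ ∣ (Nat.lcm n f : ℤ) ∧ a % Nat.gcd f n = 1 % Nat.gcd f n
      then (ArithmeticFunction.moebius n : ℝ) / (w n : ℝ) else 0) :
    ∑' n : ℕ, S n = 0 := by
  have hf0 : f ≠ 0 := by omega
  -- Δ = gcd * b
  set g : ℕ := Int.gcd (f : ℤ) Δ with hg
  have hgd : ((g : ℕ) : ℤ) ∣ Δ := Int.gcd_dvd_right _ _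
  have hΔg : Δ = (g : ℤ) * b := by rw [hb]; exact (Int.mul_ediv_cancel' hgd).symm
  obtain ⟨c, hc⟩ := hbeven
  have h2g : ((2 * g : ℕ) : ℤ) ∣ Δ := ⟨c, by push_cast; rw [hΔg, hc]; ring⟩
  have hzero : ∀ n, S n = 0 := by
    intro n
    rw [hS]
    split_ifs with hcnd
    · obtain ⟨hn1, hdvd, -⟩ := hcnd
      suffices hμ : moebius n = 0 by simp [hμ]
      by_contra hμ
      have hsq : Squarefree n := moebius_ne_zero_iff_squarefree.mp hμ
      by_cases hd4 : d % 4 = 1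
      · -- Δ = d is odd, but 2 ∣ Δ
        rw [if_pos hd4] at hΔ
        have h2d : (2 : ℤ) ∣ d := by
          refine dvd_trans ?_ (hΔ ▸ h2g)
          exact ⟨(g : ℤ), by push_cast; ring⟩
        obtain ⟨t, ht⟩ := h2d
        omega
      · rw [if_neg hd4] at hΔ
        set m : ℕ := d.natAbs with hm
        have hmsq : Squarefree m := Int.squarefree_natAbs.mpr hd
        have hΔabs : Δ.natAbs = 4 * m := by
          rw [hΔ, Int.natAbs_mul]; rfl
        have hdvdL : 4 * m ∣ Nat.lcm n f := by
          have := Int.natAbs_dvd_natAbs.mpr hdvd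
          rwa [hΔabs, Int.natAbs_natCast] at this
        have h2gN : 2 * g ∣ 4 * m := by
          have := Int.natAbs_dvd_natAbs.mpr h2g
          rwa [hΔabs, Int.natAbs_natCast] at this
        have hgN : g = Nat.gcd f Δ.natAbs := by
          rw [hg]; rfl
        by_cases h2m : 2 ∣ m
        · -- d even: v2 Δ = 3
          have h4m : ¬ (4 ∣ m) := by
            intro h4
            have := hmsq 2 (by omega : 2 * 2 ∣ m)
            exact absurd (Nat.isUnit_iff.mp this) (by norm_num)
          have h8L : 2 ^ 3 ∣ Nat.lcm n f := by
            obtain ⟨t, ht⟩ := h2m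
            exact dvd_trans ⟨t, by omega⟩ hdvdL
          have h8f : 2 ^ 3 ∣ f := pow2_dvd_f_aux hsq hf0 (by norm_num) h8L
          have h8g : 8 ∣ g := by
            rw [hgN, hΔabs]
            exact Nat.dvd_gcd (by simpa using h8f) (by obtain ⟨t, ht⟩ := h2m; exact ⟨t, by omega⟩)
          obtain ⟨s, hs⟩ := h8g
          obtain ⟨t, ht⟩ := h2gN
          have heq : 4 * m = 16 * (s * t) := by rw [ht, hs]; ring
          exact h4m ⟨s * t, by omega⟩
        · -- d odd: v2 Δ = 2
          have h4L : 2 ^ 2 ∣ Nat.lcm n f := dvd_trans ⟨m, rfl⟩ hdvdL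
          have h4f : 2 ^ 2 ∣ f := pow2_dvd_f_aux hsq hf0 le_rfl h4L
          have h4g : 4 ∣ g := by
            rw [hgN, hΔabs]
            exact Nat.dvd_gcd (by simpa using h4f) ⟨m, rfl⟩
          obtain ⟨s, hs⟩ := h4g
          obtain ⟨t, ht⟩ := h2gN
          have heq : 4 * m = 8 * (s * t) := by rw [ht, hs]; ring
          exact h2m ⟨s * t, by omega⟩
    · rfl
  calc ∑' n : ℕ, S n = ∑' _ : ℕ, (0 : ℝ) := tsum_congr hzero
    _ = 0 := tsum_zero
end

section
/- Under the same hypotheses, the sum S₂(b) = ∑_{n ≥ 1, n even, Δ | lcm(n,f), a ≡ 1 mod gcd(f,n)} μ(n)/w(n) satisfies S₂(b) = −S(b), where S(b) is the corresponding sum over all n. -/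
open ArithmeticFunction in
private lemma S_double_aux (f h : ℕ) (hf : 1 ≤ f) (hhodd : Odd h)
    (a : ℕ) (ha1 : 1 ≤ a) (hco : Nat.Coprime a f)
    (w : ℕ → ℕ)
    (hw : ∀ k, w k = k * Nat.totient (Nat.lcm k f) / (Nat.gcd k h * Nat.totient f))
    (d Δ : ℤ) (hΔ : Δ = if d % 4 = 1 then d else 4 * d)
    (S : ℕ → ℝ)
    (hS : ∀ n, S n = if 1 ≤ n ∧ Δ ∣ (Nat.lcm n f : ℤ) ∧ a % Nat.gcd f n = 1 % Nat.gcd f n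
      then (ArithmeticFunction.moebius n : ℝ) / (w n : ℝ) else 0)
    (m : ℕ) :
    S (2 * m) = -(1/2) * (if Odd m then S m else 0) := by
  by_cases hm : Odd m
  · rw [if_pos hm]
    have hm1 : 1 ≤ m := hm.pos
    have hc2m : Nat.Coprime 2 m := Nat.coprime_two_left.mpr hm
    have hL : Nat.lcm (2 * m) f = Nat.lcm 2 (Nat.lcm m f) := by
      rw [← hc2m.lcm_eq_mul, Nat.lcm_assoc]
    -- divisibility condition equivalence
    have hdvd_iff : (Δ ∣ (Nat.lcm (2 * m) f : ℤ)) ↔ (Δ ∣ (Nat.lcm m f : ℤ)) := by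
      by_cases hfe : Even f
      · have h2L : 2 ∣ Nat.lcm m f := dvd_trans hfe.two_dvd (Nat.dvd_lcm_right m f)
        rw [hL, Nat.dvd_antisymm (Nat.lcm_dvd h2L dvd_rfl) (Nat.dvd_lcm_right _ _)]
      · have hLo : ¬ (2 ∣ Nat.lcm m f) := by
          intro h2
          rcases (Nat.prime_two.dvd_mul).mp (h2.trans (Nat.lcm_dvd_mul m f)) with h' | h'
          · exact (Nat.not_even_iff_odd.mpr hm) (even_iff_two_dvd.mpr h')
          · exact hfe (even_iff_two_dvd.mpr h')
        have hLeq : Nat.lcm (2 * m) f = 2 * Nat.lcm m f := by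
          rw [hL]; exact Nat.Coprime.lcm_eq_mul
            ((Nat.prime_two.coprime_iff_not_dvd).mpr hLo)
        rw [hLeq]
        by_cases hd4 : d % 4 = 1
        · -- Δ = d is odd
          have hΔd : Δ = d := by rw [hΔ, if_pos hd4]
          have hΔodd : ¬ (2 ∣ Δ) := by
            rw [hΔd]
            intro ⟨t, ht⟩
            omega
          constructor
          · intro hdv
            obtain ⟨t, ht⟩ := hdv
            have ht' : (2:ℤ) * (Nat.lcm m f : ℤ) = Δ * t := by push_cast at ht ⊢; linarith
            have h2t : (2:ℤ) ∣ t := by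
              rcases (Int.prime_two.dvd_mul.mp ⟨(Nat.lcm m f : ℤ), ht'.symm⟩) with h' | h'
              · exact absurd h' hΔodd
              · exact h'
            obtain ⟨s, hs⟩ := h2t
            refine ⟨s, ?_⟩
            have : (2:ℤ) * (Nat.lcm m f : ℤ) = 2 * (Δ * s) := by rw [ht', hs]; ring
            linarith [mul_left_cancel₀ (two_ne_zero' ℤ) this]
          · intro hdv
            push_cast
            exact hdv.mul_left 2
        · -- Δ = 4 * d, both sides false
          have hΔ4 : Δ = 4 * d := by rw [hΔ, if_neg hd4]
          constructor
          · intro ⟨t, ht⟩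
            exfalso
            apply hLo
            have h1 : (Nat.lcm m f : ℤ) = 2 * (d * t) := by
              rw [hΔ4] at ht; push_cast at ht; linarith
            have h2 : (2 : ℤ) ∣ (Nat.lcm m f : ℤ) := ⟨d * t, h1⟩
            exact_mod_cast h2
          · intro ⟨t, ht⟩
            exfalso
            apply hLo
            have h2 : (2:ℤ) ∣ (Nat.lcm m f : ℤ) := ⟨2 * (d * t), by rw [ht, hΔ4]; ring⟩
            exact_mod_cast h2
    -- gcd condition equivalence
    have hgf : Nat.gcd f (2 * m) ∣ 2 * Nat.gcd f m := by
      have : Nat.gcd f (2 * m) ∣ Nat.gcd (2 * f) (2 * m) :=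
        Nat.dvd_gcd ((Nat.gcd_dvd_left f (2*m)).trans (dvd_mul_left f 2))
          (Nat.gcd_dvd_right f (2*m))
      rwa [Nat.gcd_mul_left] at this
    have hmod_iff : (a % Nat.gcd f (2 * m) = 1 % Nat.gcd f (2 * m)) ↔
        (a % Nat.gcd f m = 1 % Nat.gcd f m) := by
      have h1a : (1:ℕ) ≤ a := ha1
      have e1 : (a % Nat.gcd f (2*m) = 1 % Nat.gcd f (2*m)) ↔ Nat.gcd f (2*m) ∣ a - 1 := by
        rw [← Nat.modEq_iff_dvd' h1a]
        exact ⟨fun hx => (Nat.ModEq.symm hx : _), fun hx => (Nat.ModEq.symm hx : _)⟩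
      have e2 : (a % Nat.gcd f m = 1 % Nat.gcd f m) ↔ Nat.gcd f m ∣ a - 1 := by
        rw [← Nat.modEq_iff_dvd' h1a]
        exact ⟨fun hx => (Nat.ModEq.symm hx : _), fun hx => (Nat.ModEq.symm hx : _)⟩
      rw [e1, e2]
      constructor
      · intro hx
        exact dvd_trans (Nat.dvd_gcd (Nat.gcd_dvd_left f m)
          ((Nat.gcd_dvd_right f m).trans (dvd_mul_left m 2))) hx
      · intro hx
        by_cases hfe : Even f
        · -- a is odd, gcd f m is odd, so 2 * gcd f m ∣ a - 1
          have hao : Odd a := by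
            rw [Nat.odd_iff, ← Nat.not_even_iff, even_iff_two_dvd]
            intro h2a
            have := Nat.dvd_gcd h2a hfe.two_dvd
            rw [hco] at this
            omega
          have hgo : ¬ 2 ∣ Nat.gcd f m := fun h2 =>
            (Nat.not_even_iff_odd.mpr hm) (even_iff_two_dvd.mpr (h2.trans (Nat.gcd_dvd_right f m)))
          have h2a1 : 2 ∣ a - 1 := by
            obtain ⟨k, hk⟩ := hao
            exact ⟨k, by omega⟩
          have hcop : Nat.Coprime 2 (Nat.gcd f m) :=
            (Nat.prime_two.coprime_iff_not_dvd).mpr hgo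
          exact hgf.trans (Nat.Coprime.mul_dvd_of_dvd_of_dvd hcop h2a1 hx)
        · -- f odd : gcd f (2m) = gcd f m
          have : Nat.gcd f (2 * m) = Nat.gcd f m := by
            rw [Nat.gcd_comm f (2*m), Nat.gcd_comm f m]
            exact Nat.Coprime.gcd_mul_left_cancel m
              (Nat.coprime_two_left.mpr (Nat.not_even_iff_odd.mp hfe))
          rw [this]
          exact hx
    -- moebius
    have hμ : (moebius (2 * m) : ℤ) = - moebius m := by
      rw [isMultiplicative_moebius.map_mul_of_coprime hc2m,
        moebius_apply_prime Nat.prime_two]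
      ring
    -- w doubles
    have hDdvd : Nat.gcd m h * Nat.totient f ∣ m * Nat.totient (Nat.lcm m f) :=
      mul_dvd_mul (Nat.gcd_dvd_left m h) (Nat.totient_dvd_of_dvd (Nat.dvd_lcm_right m f))
    have hgcdh : Nat.gcd (2 * m) h = Nat.gcd m h :=
      Nat.Coprime.gcd_mul_left_cancel m (Nat.coprime_two_left.mpr hhodd)
    have hφ : Nat.totient (Nat.lcm (2 * m) f) = Nat.totient (Nat.lcm m f) := by
      by_cases hfe : Even f
      · have h2L : 2 ∣ Nat.lcm m f := dvd_trans hfe.two_dvd (Nat.dvd_lcm_right m f)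
        rw [hL, Nat.dvd_antisymm (Nat.lcm_dvd h2L dvd_rfl) (Nat.dvd_lcm_right _ _)]
      · have hLo : ¬ (2 ∣ Nat.lcm m f) := by
          intro h2
          rcases (Nat.prime_two.dvd_mul).mp (h2.trans (Nat.lcm_dvd_mul m f)) with h' | h'
          · exact (Nat.not_even_iff_odd.mpr hm) (even_iff_two_dvd.mpr h')
          · exact hfe (even_iff_two_dvd.mpr h')
        have hc2L : Nat.Coprime 2 (Nat.lcm m f) := (Nat.prime_two.coprime_iff_not_dvd).mpr hLo
        rw [hL, hc2L.lcm_eq_mul, Nat.totient_mul hc2L, Nat.totient_two, one_mul]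
    have hw2 : w (2 * m) = 2 * w m := by
      rw [hw, hw, hφ, hgcdh, mul_assoc, Nat.mul_div_assoc 2 hDdvd]
    -- put it together
    rw [hS (2 * m), hS m]
    have hcond : (1 ≤ 2 * m ∧ Δ ∣ (Nat.lcm (2*m) f : ℤ) ∧
          a % Nat.gcd f (2*m) = 1 % Nat.gcd f (2*m)) ↔
        (1 ≤ m ∧ Δ ∣ (Nat.lcm m f : ℤ) ∧ a % Nat.gcd f m = 1 % Nat.gcd f m) := by
      rw [hdvd_iff, hmod_iff]
      constructor
      · rintro ⟨-, h2, h3⟩; exact ⟨hm1, h2, h3⟩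
      · rintro ⟨-, h2, h3⟩; exact ⟨by omega, h2, h3⟩
    by_cases hc : (1 ≤ m ∧ Δ ∣ (Nat.lcm m f : ℤ) ∧ a % Nat.gcd f m = 1 % Nat.gcd f m)
    · rw [if_pos (hcond.mpr hc), if_pos hc, hw2]
      have : ((moebius (2*m) : ℤ) : ℝ) = -((moebius m : ℤ) : ℝ) := by
        rw [hμ]; push_cast; ring
      rw [this]
      push_cast
      rw [neg_div, div_mul_eq_div_div_swap]
      ring
    · rw [if_neg (fun hx => hc (hcond.mp hx)), if_neg hc, mul_zero]
  · -- m even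
    rw [if_neg hm, mul_zero]
    rcases Nat.eq_zero_or_pos m with hm0 | hmpos
    · rw [hm0, mul_zero, hS 0]
      simp
    · have h2m : 2 ∣ m := (even_iff_two_dvd).mp (Nat.not_odd_iff_even.mp hm)
      have hnsq : ¬ Squarefree (2 * m) := by
        intro hsq
        have h4 : 2 * 2 ∣ 2 * m := mul_dvd_mul_left 2 h2m
        exact Nat.prime_two.not_isUnit (hsq 2 h4)
      rw [hS (2 * m), moebius_eq_zero_of_not_squarefree hnsq]
      simp

open ArithmeticFunction in
theorem S_two_eq_neg_S (f h : ℕ) (hf : 1 ≤ f) (hh : 1 ≤ h) (hhodd : Odd h)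
    (a : ℕ) (ha1 : 1 ≤ a) (haf : a ≤ f) (hco : Nat.Coprime a f)
    (w : ℕ → ℕ)
    (hw : ∀ k, w k = k * Nat.totient (Nat.lcm k f) / (Nat.gcd k h * Nat.totient f))
    (d : ℤ) (hd : Squarefree d) (hd0 : d ≠ 0) (hd1 : d ≠ 1)
    (Δ : ℤ) (hΔ : Δ = if d % 4 = 1 then d else 4 * d)
    (b : ℤ) (hb : b = Δ / (Int.gcd (f : ℤ) Δ : ℤ))
    (S S₂ : ℕ → ℝ)
    (hS : ∀ n, S n = if 1 ≤ n ∧ Δ ∣ (Nat.lcm n f : ℤ) ∧ a % Nat.gcd f n = 1 % Nat.gcd f n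
      then (ArithmeticFunction.moebius n : ℝ) / (w n : ℝ) else 0)
    (hS₂ : ∀ n, S₂ n = if 2 ∣ n then S n else 0) :
    ∑' n : ℕ, S₂ n = - ∑' n : ℕ, S n := by
  classical
  set O : ℕ → ℝ := fun n => if Odd n then S n else 0 with hO
  have hdouble : ∀ m, S (2 * m) = -(1/2) * O m := fun m =>
    S_double_aux f h hf hhodd a ha1 hco w hw d Δ hΔ S hS m
  have hSplit : ∀ n, S n = O n + S₂ n := by
    intro n
    rcases Nat.even_or_odd n with he | ho
    · rw [hS₂ n, if_pos (even_iff_two_dvd.mp he), hO]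
      simp [Nat.not_odd_iff_even.mpr he]
    · rw [hS₂ n, if_neg (fun h2 => (Nat.not_even_iff_odd.mpr ho) (even_iff_two_dvd.mpr h2)), hO]
      simp [ho]
  have hinj : Function.Injective (fun m : ℕ => 2 * m) := fun x y hxy =>
    Nat.eq_of_mul_eq_mul_left (by norm_num) hxy
  have hsupp : ∀ n ∉ Set.range (fun m : ℕ => 2 * m), S₂ n = 0 := by
    intro n hn
    rw [hS₂ n, if_neg]
    intro ⟨k, hk⟩
    exact hn ⟨k, hk.symm⟩
  have hcomp : ∀ m, S₂ (2 * m) = -(1/2) * O m := by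
    intro m
    rw [hS₂, if_pos ⟨m, rfl⟩, hdouble]
  have htsum2 : ∑' n, S₂ n = -(1/2) * ∑' m, O m := by
    rw [← hinj.tsum_eq (f := S₂) (fun n hn => by
      by_contra hr
      exact hn (hsupp n hr))]
    simp only [hcomp]
    exact tsum_mul_left
  by_cases hsum : Summable O
  · have hS2sum : Summable S₂ := by
      rw [← hinj.summable_iff hsupp]
      have : (S₂ ∘ fun m : ℕ => 2 * m) = fun m => -(1/2) * O m := by
        funext m; exact hcomp m
      rw [this]
      exact hsum.mul_left _
    have hSsum : Summable S := by
      have := hsum.add hS2sum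
      convert this using 1
      funext n
      exact hSplit n
    have htsumS : ∑' n, S n = ∑' n, O n + ∑' n, S₂ n := by
      rw [← Summable.tsum_add hsum hS2sum]
      exact tsum_congr hSplit
    rw [htsum2, htsumS, htsum2]
    ring
  · have hS2nsum : ¬ Summable S₂ := by
      intro hc
      apply hsum
      have h1 : Summable (S₂ ∘ fun m : ℕ => 2 * m) := hc.comp_injective hinj
      have h2 : Summable (fun m => -(1/2 : ℝ) * O m) := by
        have : (S₂ ∘ fun m : ℕ => 2 * m) = fun m => -(1/2) * O m := by
          funext m; exact hcomp m
        rwa [this] at h1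
      have h3 := h2.mul_left (-2 : ℝ)
      convert h3 using 1
      · rfl
      funext m
      ring
    have hSnsum : ¬ Summable S := by
      intro hc
      apply hsum
      have : O = Set.indicator {n | Odd n} S := by
        funext n
        rw [hO, Set.indicator_apply]
        rfl
      rw [this]
      exact hc.indicator _
    rw [tsum_eq_zero_of_not_summable hS2nsum, tsum_eq_zero_of_not_summable hSnsum]
    simp
end

section
/- Let g be a squarefree integer with g ≡ 1 (mod 4), g ≠ 1, and let f ≥ 1 with gcd(f, g) = 1 and f odd. Then √g ∈ ℚ(ζ_{f·|g|}) but √g ∉ ℚ(ζ_f). -/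
open AddChar

noncomputable def qch (L : Type*) [Field L] (p : ℕ) [Fact p.Prime] : MulChar (ZMod p) L :=
  (quadraticChar (ZMod p)).ringHomComp (Int.castRingHom L)

section aux
variable {L : Type*} [Field L] [CharZero L]

lemma qch_ne_one (L : Type*) [Field L] [CharZero L] (p : ℕ) [Fact p.Prime] (hp2 : p ≠ 2) :
    qch L p ≠ 1 := by
  have h : ringChar (ZMod p) ≠ 2 := by rw [ZMod.ringChar_zmod_n]; exact hp2
  exact (MulChar.ringHomComp_ne_one_iff (Int.cast_injective)).mpr (quadraticChar_ne_one h)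

lemma qch_quadratic (L : Type*) [Field L] (p : ℕ) [Fact p.Prime] :
    (qch L p).IsQuadratic := (quadraticChar_isQuadratic (ZMod p)).comp _

lemma gauss_sq (p : ℕ) [Fact p.Prime] (hp2 : p ≠ 2) {ζp : L} (hζp : IsPrimitiveRoot ζp p) :
    (gaussSum (qch L p) (zmodChar p hζp.pow_eq_one)) ^ 2
      = ((if p % 4 = 1 then (p : ℤ) else -(p : ℤ)) : L) := by
  have h : ringChar (ZMod p) ≠ 2 := by rw [ZMod.ringChar_zmod_n]; exact hp2
  have hprim : IsPrimitive (zmodChar p hζp.pow_eq_one) :=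
    zmodChar_primitive_of_primitive_root p hζp
  rw [gaussSum_sq (qch_ne_one L p hp2) (qch_quadratic L p) hprim]
  have hm1 : (qch L p) (-1) = ((quadraticChar (ZMod p) (-1) : ℤ) : L) := rfl
  rw [hm1, quadraticChar_neg_one h]
  have hcard : Fintype.card (ZMod p) = p := ZMod.card p
  rw [hcard]
  have hodd : p % 2 = 1 := Nat.odd_iff.mp ((Fact.out : p.Prime).odd_of_ne_two hp2)
  rw [ZMod.χ₄_nat_eq_if_mod_four]
  split_ifs with h1 h2 h3 <;> first
    | (exfalso; omega)
    | (push_cast; ring)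

lemma gauss_map (p : ℕ) [Fact p.Prime] {ζp : L} (hζp : IsPrimitiveRoot ζp p)
    (σ : L →+* L) (c : ℕ) (hc : Nat.Coprime c p) (hσ : σ ζp = ζp ^ c) :
    σ (gaussSum (qch L p) (zmodChar p hζp.pow_eq_one))
      = ((quadraticChar (ZMod p) ((c : ZMod p)) : ℤ) : L)
        * gaussSum (qch L p) (zmodChar p hζp.pow_eq_one) := by
  set χ := qch L p with hχ
  set ψ := zmodChar p hζp.pow_eq_one with hψ
  have hp0 : (0:ℕ) < p := (Fact.out : p.Prime).pos
  haveI : NeZero p := ⟨hp0.ne'⟩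
  set u : (ZMod p)ˣ := ZMod.unitOfCoprime c hc with hu
  have huc : (u : ZMod p) = (c : ZMod p) := ZMod.coe_unitOfCoprime c hc
  have step1 : σ (gaussSum χ ψ) = gaussSum χ (AddChar.mulShift ψ (u : ZMod p)) := by
    rw [gaussSum, gaussSum, map_sum]
    refine Finset.sum_congr rfl fun a _ => ?_
    rw [map_mul]
    have h1 : σ (χ a) = χ a := by
      rw [hχ]; exact map_intCast σ _
    rw [h1]
    congr 1
    rw [hψ, AddChar.mulShift_apply, AddChar.zmodChar_apply, AddChar.zmodChar_apply, map_pow, hσ,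
      ← pow_mul]
    have hpow : ∀ m : ℕ, ζp ^ m = ζp ^ (m % p) := fun m => by
      conv_lhs => rw [← Nat.div_add_mod m p]
      rw [pow_add, pow_mul, hζp.pow_eq_one, one_pow, one_mul]
    rw [hpow (c * a.val), hpow (((u : ZMod p) * a).val)]
    congr 1
    rw [ZMod.val_mul, huc, ZMod.val_natCast, Nat.mod_mod_of_dvd, Nat.mul_mod,
      Nat.mod_eq_of_lt (ZMod.val_lt a)]
    exact dvd_rfl
  have hq2 : χ (u : ZMod p) * χ (u : ZMod p) = 1 := by
    have h0 : ((u : ZMod p)) ≠ 0 := Units.ne_zero u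
    rcases quadraticChar_dichotomy h0 with h | h <;>
      · rw [hχ]
        show ((quadraticChar (ZMod p) _ : ℤ) : L) * ((quadraticChar (ZMod p) _ : ℤ) : L) = 1
        rw [h]; norm_num
  have step2 := gaussSum_mulShift χ ψ u
  have : σ (gaussSum χ ψ) = χ (u : ZMod p) * gaussSum χ ψ := by
    rw [step1, ← step2, ← mul_assoc, hq2, one_mul]
  rw [this, huc]
  rfl

end aux

lemma pstar_mod4 (g : ℤ) (hg4 : g % 4 = 1) (p : ℕ) (hp : p ∈ g.natAbs.primeFactors) :
    p % 4 = 1 ∨ p % 4 = 3 := by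
  have hpp : p.Prime := Nat.prime_of_mem_primeFactors hp
  have hdvd : p ∣ g.natAbs := Nat.dvd_of_mem_primeFactors hp
  have hgodd : Odd g.natAbs := by
    rw [Int.natAbs_odd]; rcases Int.even_or_odd g with ⟨k, hk⟩ | ho; · omega
    · exact ho
  have hp2 : p ≠ 2 := by
    rintro rfl; obtain ⟨k, hk⟩ := hgodd; obtain ⟨c, hc⟩ := hdvd; omega
  have hodd : p % 2 = 1 := Nat.odd_iff.mp (hpp.odd_of_ne_two hp2)
  omega

lemma pstar_prod (g : ℤ) (hg : Squarefree g) (hg4 : g % 4 = 1) :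
    ∏ p ∈ g.natAbs.primeFactors, (if p % 4 = 1 then (p : ℤ) else -(p : ℤ)) = g := by
  have hg0 : g ≠ 0 := hg.ne_zero
  have hsq : Squarefree g.natAbs := Int.squarefree_natAbs.mpr hg
  set S := g.natAbs.primeFactors with hS
  set P := ∏ p ∈ S, (if p % 4 = 1 then (p : ℤ) else -(p : ℤ)) with hP
  have hprodp : ∏ p ∈ S, (p : ℤ) = (g.natAbs : ℤ) := by
    rw [← Nat.cast_prod]
    norm_cast
    exact Nat.prod_primeFactors_of_squarefree hsq
  have hsplit : P = (∏ p ∈ S, (if p % 4 = 1 then (1 : ℤ) else -1)) * (g.natAbs : ℤ) := by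
    rw [hP, ← hprodp, ← Finset.prod_mul_distrib]
    refine Finset.prod_congr rfl fun p _ => ?_
    split <;> ring
  have heps : (∏ p ∈ S, (if p % 4 = 1 then (1 : ℤ) else -1)) = 1 ∨
      (∏ p ∈ S, (if p % 4 = 1 then (1 : ℤ) else -1)) = -1 := by
    refine Finset.prod_induction _ (fun x => x = 1 ∨ x = -1) ?_ (Or.inl rfl) ?_
    · rintro a b (rfl|rfl) (rfl|rfl) <;> simp
    · intro p _; split <;> simp
  have hmod : P % 4 = 1 := by
    have h1 : (P : ZMod 4) = 1 := by
      simp only [hP]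
      push_cast
      rw [Finset.prod_congr rfl (fun p hp => ?_), Finset.prod_const_one]
      rcases pstar_mod4 g hg4 p hp with h | h
      · rw [if_pos h, ← ZMod.natCast_mod p 4, h]; norm_num
      · rw [if_neg (by omega), ← ZMod.natCast_mod p 4, h]; decide
    have := (ZMod.intCast_eq_intCast_iff' P 1 4).mp h1
    simpa [Int.ModEq, Int.emod_emod_of_dvd] using this
  have habs : g = (g.natAbs : ℤ) ∨ g = -(g.natAbs : ℤ) := Int.natAbs_eq g
  rcases heps with he | he <;> rw [he] at hsplit <;> rcases habs with ha | ha <;> omega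

set_option maxHeartbeats 1600000 in
open Complex IntermediateField in
theorem sqrt_mem_cyclotomic_conductor
    (g : ℤ) (hg : Squarefree g) (hg4 : g % 4 = 1) (hg1 : g ≠ 1)
    (f : ℕ) (hf : 1 ≤ f) (hfodd : Odd f) (hco : Int.gcd (f : ℤ) g = 1)
    (ζ ζ' : ℂ)
    (hζ : ζ = Complex.exp (2 * Real.pi * Complex.I / (f * g.natAbs)))
    (hζ' : ζ' = Complex.exp (2 * Real.pi * Complex.I / f)) :
    (∃ x ∈ ℚ⟮ζ⟯, x ^ 2 = (g : ℂ)) ∧ ¬ ∃ x ∈ ℚ⟮ζ'⟯, x ^ 2 = (g : ℂ) := by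
  classical
  have hg0 : g ≠ 0 := hg.ne_zero
  have habs1 : 1 < g.natAbs := by
    rcases Int.natAbs_eq g with h | h <;> omega
  set N := f * g.natAbs with hN
  have hNpos : 0 < N := by positivity
  have hN0 : N ≠ 0 := hNpos.ne'
  haveI : NeZero N := ⟨hN0⟩
  have hζprim : IsPrimitiveRoot ζ N := by
    rw [hζ]
    convert Complex.isPrimitiveRoot_exp N hN0 using 3
    push_cast [hN]
    ring
  set L : IntermediateField ℚ ℂ := ℚ⟮ζ⟯ with hL
  set μ : L := AdjoinSimple.gen ℚ ζ with hμdef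
  have hvalμ : L.val μ = ζ := rfl
  have hμ : IsPrimitiveRoot μ N := by
    apply IsPrimitiveRoot.of_map_of_injective (f := L.val)
    · rw [hvalμ]; exact hζprim
    · exact L.val.injective
  set S := g.natAbs.primeFactors with hS
  -- basic facts about primes in S
  have hSfact : ∀ p ∈ S, p.Prime := fun p hp => Nat.prime_of_mem_primeFactors hp
  have hSdvdg : ∀ p ∈ S, p ∣ g.natAbs := fun p hp => Nat.dvd_of_mem_primeFactors hp
  have hSdvdN : ∀ p ∈ S, p ∣ N := fun p hp => (hSdvdg p hp).mul_left f
  have hS2 : ∀ p ∈ S, p ≠ 2 := by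
    intro p hp
    have := pstar_mod4 g hg4 p hp
    omega
  -- the primitive p-th roots
  have hζp : ∀ p ∈ S, IsPrimitiveRoot (μ ^ (N / p)) p := by
    intro p hp
    exact hμ.pow hNpos (Nat.div_mul_cancel (hSdvdN p hp)).symm
  -- the Gauss sums
  set G : (q : {x // x ∈ S}) → L := fun q =>
    letI : Fact q.1.Prime := ⟨hSfact q.1 q.2⟩
    gaussSum (qch L q.1) (zmodChar q.1 (hζp q.1 q.2).pow_eq_one) with hG
  set t : L := ∏ q ∈ S.attach, G q with ht
  have ht2 : t ^ 2 = ((g : ℤ) : L) := by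
    rw [ht, ← Finset.prod_pow]
    have : ∀ q ∈ S.attach, G q ^ 2
        = (((if q.1 % 4 = 1 then (q.1 : ℤ) else -(q.1 : ℤ)) : ℤ) : L) := by
      intro q _
      letI : Fact q.1.Prime := ⟨hSfact q.1 q.2⟩
      simp only [hG]
      rw [gauss_sq q.1 (hS2 q.1 q.2) (hζp q.1 q.2)]
      split <;> simp
    rw [Finset.prod_congr rfl this, Finset.prod_attach S
      (fun p => (((if p % 4 = 1 then (p : ℤ) else -(p : ℤ)) : ℤ) : L)), ← Int.cast_prod]
    exact congrArg _ (pstar_prod g hg hg4)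
  constructor
  · refine ⟨(t : ℂ), t.2, ?_⟩
    have : ((t : ℂ)) ^ 2 = ((t ^ 2 : L) : ℂ) := by push_cast; ring
    rw [this, ht2]
    push_cast
    ring
  -- Part 2
  rintro ⟨x, hxmem, hx2⟩
  -- choose p₀ and the CRT unit c
  obtain ⟨p₀, hp₀S⟩ : S.Nonempty := by
    rw [hS, Nat.nonempty_primeFactors]; exact habs1
  haveI hp₀fact : Fact p₀.Prime := ⟨hSfact p₀ hp₀S⟩
  have hp₀p : p₀.Prime := hSfact p₀ hp₀S
  have hp₀2 : p₀ ≠ 2 := hS2 p₀ hp₀S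
  have hchar : ringChar (ZMod p₀) ≠ 2 := by rw [ZMod.ringChar_zmod_n]; exact hp₀2
  obtain ⟨b, hb⟩ := quadraticChar_exists_neg_one hchar
  have hb0 : b ≠ 0 := by
    rintro rfl
    rw [MulChar.map_zero] at hb
    norm_num at hb
  set m := N / p₀ with hm
  have hmp : m * p₀ = N := Nat.div_mul_cancel (hSdvdN p₀ hp₀S)
  have hcop_mp : Nat.Coprime m p₀ := by
    have hnd : ¬ p₀ ∣ m := by
      intro hd
      have : p₀ * p₀ ∣ N := by
        calc p₀ * p₀ ∣ m * p₀ := mul_dvd_mul_right hd p₀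
        _ = N := hmp
      rw [hN] at this
      have hsqf : Squarefree g.natAbs := Int.squarefree_natAbs.mpr hg
      have hcopfg : Nat.Coprime f g.natAbs := by
        have h := hco
        simp only [Int.gcd, Int.natAbs_natCast] at h
        exact h
      have hpf : ¬ p₀ ∣ f := fun hd =>
        Nat.Prime.one_lt hp₀p |>.ne' (Nat.eq_one_of_dvd_coprimes hcopfg hd (hSdvdg p₀ hp₀S) ▸ rfl)
      have hcop2 : Nat.Coprime (p₀ * p₀) f :=
        Nat.Coprime.mul ((Nat.Prime.coprime_iff_not_dvd hp₀p).mpr hpf)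
          ((Nat.Prime.coprime_iff_not_dvd hp₀p).mpr hpf)
      have hdg : p₀ * p₀ ∣ g.natAbs := Nat.Coprime.dvd_of_dvd_mul_left hcop2 this
      exact hp₀p.not_isUnit (hsqf p₀ hdg)
    exact ((Nat.Prime.coprime_iff_not_dvd hp₀p).mpr hnd).symm
  set c : ℕ := (Nat.chineseRemainder hcop_mp 1 b.val : ℕ) with hc
  have hc1 : c ≡ 1 [MOD m] := (Nat.chineseRemainder hcop_mp 1 b.val).2.1
  have hcb : c ≡ b.val [MOD p₀] := (Nat.chineseRemainder hcop_mp 1 b.val).2.2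
  have hccm : Nat.Coprime c m := by
    have : Nat.gcd m c = Nat.gcd m 1 := by
      rw [Nat.gcd_rec m c, Nat.gcd_rec m 1, hc1]
    simpa [Nat.Coprime, Nat.gcd_comm] using this
  have hccp : Nat.Coprime c p₀ := by
    have hbv : b.val < p₀ := ZMod.val_lt b
    have hbv0 : b.val ≠ 0 := fun h => hb0 (by rwa [← ZMod.val_eq_zero])
    have heq : Nat.gcd p₀ c = Nat.gcd p₀ b.val := by
      rw [Nat.gcd_rec p₀ c, Nat.gcd_rec p₀ b.val, hcb]
    have h2 : Nat.Coprime p₀ b.val := (Nat.Prime.coprime_iff_not_dvd hp₀p).mpr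
      (fun h => hbv0 (Nat.eq_zero_of_dvd_of_lt h hbv))
    have h3 : Nat.Coprime p₀ c := by rw [Nat.Coprime, heq]; exact h2
    exact h3.symm
  have hccN : Nat.Coprime c N := by
    rw [← hmp]; exact Nat.Coprime.mul_right hccm hccp
  -- the automorphism
  set n' : ℕ+ := ⟨N, hNpos⟩ with hn'
  have hζprim' : IsPrimitiveRoot ζ ((n' : ℕ+) : ℕ) := hζprim
  have halg : IsIntegral ℚ ζ := (hζprim.isIntegral hNpos).tower_top
  have hsub : (ℚ⟮ζ⟯).toSubalgebra = Algebra.adjoin ℚ {ζ} :=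
    IntermediateField.adjoin_simple_toSubalgebra_of_isAlgebraic halg.isAlgebraic
  haveI hcycA : IsCyclotomicExtension {(n' : ℕ)} ℚ (Algebra.adjoin ℚ {ζ}) :=
    hζprim'.adjoin_isCyclotomicExtension ℚ
  haveI hcyc : IsCyclotomicExtension {(n' : ℕ)} ℚ L :=
    IsCyclotomicExtension.equiv {(n' : ℕ)} ℚ _ (Subalgebra.equivOfEq _ _ hsub).symm
  have hirr : Irreducible (Polynomial.cyclotomic (n' : ℕ) ℚ) :=
    Polynomial.cyclotomic.irreducible_rat n'.pos
  set u : (ZMod N)ˣ := ZMod.unitOfCoprime c hccN with hudef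
  set σ : L ≃ₐ[ℚ] L := (IsCyclotomicExtension.autEquivPow L hirr).symm u with hσdef
  have hpowμ : ∀ (w : L), w ^ N = 1 → ∀ a : ℕ, w ^ a = w ^ (a % N) := by
    intro w hw a
    conv_lhs => rw [← Nat.div_add_mod a N]
    rw [pow_add, pow_mul, hw, one_pow, one_mul]
  have hσμ : σ μ = μ ^ c := by
    set z := IsCyclotomicExtension.zeta n' ℚ L with hz
    have hzprim : IsPrimitiveRoot z n' := IsCyclotomicExtension.zeta_spec n' ℚ L
    have h1 : hzprim.autToPow ℚ σ = u := by
      have := (IsCyclotomicExtension.autEquivPow L hirr).apply_symm_apply u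
      rw [← this, hσdef]
      rfl
    have h2 : z ^ ((u : ZMod N)).val = σ z := by
      rw [← h1]
      exact hzprim.autToPow_spec ℚ σ
    have hzc : σ z = z ^ c := by
      rw [← h2, ZMod.coe_unitOfCoprime, ZMod.val_natCast, ← hpowμ z hzprim.pow_eq_one c]
    obtain ⟨k, _, hk⟩ := hzprim.eq_pow_of_pow_eq_one hμ.pow_eq_one
    rw [← hk, map_pow, hzc, ← pow_mul, ← pow_mul, mul_comm c k]
  -- σ fixes ℚ⟮ζ'⟯
  have hζ'val : ζ' = ζ ^ g.natAbs := by
    rw [hζ', hζ, ← Complex.exp_nat_mul]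
    congr 1
    have hf0 : (f : ℂ) ≠ 0 := Nat.cast_ne_zero.mpr (by omega)
    have hg0' : ((g.natAbs : ℂ)) ≠ 0 := Nat.cast_ne_zero.mpr (by omega)
    field_simp
  set μ' : L := μ ^ g.natAbs with hμ'def
  have hμ'val : L.val μ' = ζ' := by rw [hμ'def, map_pow, hvalμ, hζ'val]
  have hfm : f ∣ m := by
    rw [hm, hN, Nat.mul_div_assoc f (hSdvdg p₀ hp₀S)]
    exact dvd_mul_right f _
  have hcf : c ≡ 1 [MOD f] := Nat.ModEq.of_dvd hfm hc1
  have hσμ' : σ μ' = μ' := by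
    rw [hμ'def, map_pow, hσμ, ← pow_mul,
      hpowμ μ hμ.pow_eq_one (c * g.natAbs), hpowμ μ hμ.pow_eq_one g.natAbs]
    congr 1
    have h2 := hcf.mul_right' (c := g.natAbs)
    rw [one_mul] at h2
    exact h2
  have hσinvμ' : σ⁻¹ μ' = μ' := by
    conv_lhs => rw [← hσμ']
    rw [← AlgEquiv.mul_apply, inv_mul_cancel, AlgEquiv.one_apply]
  have hfixμ' : ∀ k : ℤ, (σ ^ k : L ≃ₐ[ℚ] L) μ' = μ' := by
    intro k
    induction k using Int.induction_on with
    | zero => rw [zpow_zero, AlgEquiv.one_apply]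
    | succ k ih => rw [zpow_add_one, AlgEquiv.mul_apply, hσμ', ih]
    | pred k ih => rw [zpow_sub_one, AlgEquiv.mul_apply, hσinvμ', ih]
  have hE : ℚ⟮ζ'⟯ ≤ (IntermediateField.fixedField (Subgroup.zpowers σ)).map L.val := by
    rw [IntermediateField.adjoin_le_iff]
    intro w hw
    rw [Set.mem_singleton_iff] at hw
    subst hw
    refine ⟨μ', ?_, hμ'val⟩
    rintro ⟨γ, k, rfl⟩
    exact hfixμ' k
  obtain ⟨y, hyfix, hyval⟩ := hE hxmem
  have hσy : σ y = y := hyfix ⟨σ, Subgroup.mem_zpowers σ⟩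
  have hyval' : L.val y = x := hyval
  have hy2 : y ^ 2 = ((g : ℤ) : L) := by
    apply Subtype.val_injective
    have h5 : L.val (y ^ 2) = L.val ((g : ℤ) : L) := by
      rw [map_pow, hyval', hx2, map_intCast]
    exact h5
  -- σ t = -t
  have hσt : σ t = -t := by
    set χv : {x // x ∈ S} → ℤ := fun q =>
      letI : Fact q.1.Prime := ⟨hSfact q.1 q.2⟩
      (quadraticChar (ZMod q.1) ((c : ZMod q.1)) : ℤ) with hχv
    have hmap : ∀ q ∈ S.attach, σ (G q) = ((χv q : ℤ) : L) * G q := by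
      intro q _
      letI : Fact q.1.Prime := ⟨hSfact q.1 q.2⟩
      have hcq : Nat.Coprime c q.1 := Nat.Coprime.coprime_dvd_right (hSdvdN q.1 q.2) hccN
      have hσζp : σ.toAlgHom.toRingHom ((μ ^ (N / q.1))) = (μ ^ (N / q.1)) ^ c := by
        show σ (μ ^ (N / q.1)) = _
        rw [map_pow, hσμ, ← pow_mul, ← pow_mul, mul_comm c (N / q.1)]
      simp only [hG, hχv]
      exact gauss_map q.1 (hζp q.1 q.2) σ.toAlgHom.toRingHom c hcq hσζp
    have hval : ∀ q ∈ S.attach, χv q = if q.1 = p₀ then (-1 : ℤ) else 1 := by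
      intro q _
      letI : Fact q.1.Prime := ⟨hSfact q.1 q.2⟩
      simp only [hχv]
      split_ifs with hq
      · have hbc : ((c : ℕ) : ZMod q.1) = (b.val : ZMod q.1) :=
          (ZMod.natCast_eq_natCast_iff c b.val q.1).mpr (hq ▸ hcb)
        rw [hbc]
        have hbb : ((b.val : ℕ) : ZMod q.1) = hq ▸ b := by
          subst hq
          exact ZMod.natCast_rightInverse b
        subst hq
        rw [hbb, hb]
      · have hpm : q.1 ∣ m := by
          have hq1 : q.1 ∣ g.natAbs := hSdvdg q.1 q.2
          have hr : p₀ ∣ g.natAbs := hSdvdg p₀ hp₀S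
          obtain ⟨r, hrr⟩ := hr
          have hqr : q.1 ∣ r := by
            haveI : Fact q.1.Prime := ⟨hSfact q.1 q.2⟩
            have hcopq : Nat.Coprime q.1 p₀ :=
              (Nat.coprime_primes (hSfact q.1 q.2) hp₀p).mpr hq
            rw [hrr] at hq1
            exact Nat.Coprime.dvd_of_dvd_mul_left hcopq hq1
          have : m = f * r := by
            rw [hm, hN, hrr]
            rw [Nat.mul_div_assoc f (Dvd.intro r rfl)]
            congr 1
            rw [Nat.mul_div_cancel_left r hp₀p.pos]
          rw [this]
          exact Dvd.dvd.mul_left hqr f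
        have hcq1 : c ≡ 1 [MOD q.1] := Nat.ModEq.of_dvd hpm hc1
        have h6 : ((c : ℕ) : ZMod q.1) = 1 := by
          rw [(ZMod.natCast_eq_natCast_iff c 1 q.1).mpr hcq1]
          exact Nat.cast_one
        rw [h6, MulChar.map_one]
    have hsign : ∏ q ∈ S.attach, ((χv q : ℤ) : L) = -1 := by
      calc ∏ q ∈ S.attach, ((χv q : ℤ) : L)
          = ∏ q ∈ S.attach, (if q.1 = p₀ then (-1 : L) else 1) := by
            refine Finset.prod_congr rfl fun q hq => ?_
            rw [hval q hq]
            split_ifs <;> norm_num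
        _ = ∏ p ∈ S, (if p = p₀ then (-1 : L) else 1) :=
            Finset.prod_attach S (fun p => if p = p₀ then (-1 : L) else 1)
        _ = -1 := by
            rw [Finset.prod_eq_single_of_mem p₀ hp₀S (fun b hbS hbne => if_neg hbne), if_pos rfl]
    calc σ t = ∏ q ∈ S.attach, σ (G q) := map_prod σ _ _
      _ = ∏ q ∈ S.attach, ((χv q : ℤ) : L) * G q :=
          Finset.prod_congr rfl hmap
      _ = (∏ q ∈ S.attach, ((χv q : ℤ) : L)) * ∏ q ∈ S.attach, G q :=
          Finset.prod_mul_distrib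
      _ = -t := by rw [hsign, ht]; ring
  -- final contradiction
  have ht0 : t ≠ 0 := by
    intro h
    rw [h] at ht2
    have : ((g : ℤ) : L) ≠ 0 := Int.cast_ne_zero.mpr hg0
    simp at ht2
    exact this ht2.symm
  have hy2t : (y + t) * (y - t) = 0 := by
    have h0 : y ^ 2 - t ^ 2 = 0 := by rw [hy2, ht2, sub_self]
    rw [← sq_sub_sq]
    exact h0
  have htt : t = 0 := by
    rcases mul_eq_zero.mp hy2t with h | h
    · have hy : y = -t := by linear_combination h
      have h1 : t = -t := by
        have h2 := hσy
        rw [hy, map_neg, hσt, neg_neg] at h2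
        exact h2
      have h3 : (2 : L) * t = 0 := by linear_combination h1
      rcases mul_eq_zero.mp h3 with h4 | h4
      · exact absurd h4 two_ne_zero
      · exact h4
    · have hy : y = t := by linear_combination h
      have h2 := hσy
      rw [hy] at h2
      rw [hσt] at h2
      have h3 : (2 : L) * t = 0 := by linear_combination -h2
      rcases mul_eq_zero.mp h3 with h4 | h4
      · exact absurd h4 two_ne_zero
      · exact h4
  exact ht0 htt
end
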